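/- Suppose M is left-cancellative up to invertibles on the left, right-coprime-cancellative, and every family w : I → M indexed by a nonempty countable set I has a left-gcd that is unique up to invertibles on the right (any two left-gcds δ, δ' satisfy δ' = δ * χ for some unit χ). Then Kl(T_M) has countable powers of 1. -/

import Mathlib

/-- Kleisli composition for the monad `T_M X = Option (M × X)`. -/
def KlComp {M : Type} [Monoid M] {X Y Z : Type}
    (g : Y → Option (M × Z)) (f : X → Option (M × Y)) : X → Option (M × Z) :=
  fun x => (f x).bind fun p => (g p.2).map fun q => (p.1 * q.1, q.2)

/-- The Kleisli identity on `X`. -/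
def KlId (M : Type) [Monoid M] (X : Type) : X → Option (M × X) :=
  fun x => some (1, x)

/-- A Kleisli morphism is an isomorphism when it has a two-sided inverse. -/
def IsKlIso {M : Type} [Monoid M] {X Y : Type} (f : X → Option (M × Y)) : Prop :=
  ∃ g : Y → Option (M × X), KlComp g f = KlId M X ∧ KlComp f g = KlId M Y

/-- The class `Surj` of Kleisli morphisms. -/
def KlSurj {M X Y : Type} (f : X → Option (M × Y)) : Prop :=
  ∀ y : Y, ∃ (x : X) (υ : M), f x = some (υ, y)

/-- The class `Inj` of Kleisli morphisms. -/
def KlInj {M X Y : Type} (f : X → Option (M × Y)) : Prop :=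
  ∀ (x x' : X) (υ υ' : M) (y : Y), f x = some (υ, y) → f x' = some (υ', y) → x = x'

/-- The class `Tot` of Kleisli morphisms. -/
def KlTot {M X Y : Type} (f : X → Option (M × Y)) : Prop :=
  ∀ x : X, f x ≠ none

/-- The class `Inv` of Kleisli morphisms. -/
def KlInv {M : Type} [Monoid M] {X Y : Type} (f : X → Option (M × Y)) : Prop :=
  ∀ (x : X) (υ : M) (y : Y), f x = some (υ, y) → IsUnit υ
/-- `Kl(T_M)` has countable powers of `1`. -/
def HasCountablePowersOfOne (M : Type) [Monoid M] : Prop :=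
  ∃ (P : Type) (π : ℕ → P → Option (M × PUnit)),
    ∀ (X : Type) (f : ℕ → X → Option (M × PUnit)),
      ∃! h : X → Option (M × P), ∀ n, KlComp (π n) h = f n
/-- `u` left-divides the family `w`. -/
def LeftDividesFam {M I : Type} [Monoid M] (u : M) (w : I → M) : Prop :=
  ∃ v : I → M, ∀ i, u * v i = w i

/-- `δ` is a left-gcd of the family `w`. -/
def IsLeftGcd {M I : Type} [Monoid M] (δ : M) (w : I → M) : Prop :=
  LeftDividesFam δ w ∧ ∀ d : M, LeftDividesFam d w → ∃ c : M, d * c = δ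

/-- The family `w` is left-coprime: every left-divisor has a right inverse. -/
def LeftCoprimeFam {M I : Type} [Monoid M] (w : I → M) : Prop :=
  ∀ d : M, LeftDividesFam d w → ∃ y : M, d * y = 1

/-- `M` is left-cancellative up to invertibles on the left. -/
def LeftCancellativeUpToInv (M : Type) [Monoid M] : Prop :=
  ∀ (I : Type) [Countable I] [Nonempty I] (w : M) (u v : I → M),
    (∀ i, w * u i = w * v i) → ∃ x : Mˣ, ∀ i, u i = ↑x * v i

/-- `M` is right-coprime-cancellative. -/
def RightCoprimeCancellative (M : Type) [Monoid M] : Prop :=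
  ∀ (I : Type) [Countable I] [Nonempty I] (u v : M) (w : I → M),
    LeftCoprimeFam w → (∀ i, u * w i = v * w i) → u = v

section KPAux
variable {M : Type} [Monoid M]

/-- coprime families of partial elements -/
def PreP (M : Type) [Monoid M] : Type :=
  {g : ℕ → Option M //
    (∃ n a, g n = some a) ∧
    ∀ d : M, (∀ n a, g n = some a → ∃ c, d * c = a) → ∃ y, d * y = 1}

instance prePSetoid (M : Type) [Monoid M] : Setoid (PreP M) where
  r g g' := ∃ x : Mˣ, ∀ n, g'.1 n = (g.1 n).map (fun a => ↑x * a)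
  iseqv := by
    constructor
    · intro g
      exact ⟨1, fun n => by cases h : g.1 n <;> simp [h]⟩
    · rintro g g' ⟨x, hx⟩
      refine ⟨x⁻¹, fun n => ?_⟩
      rw [hx n]; cases g.1 n <;> simp [← mul_assoc]
    · rintro a b c ⟨x, hx⟩ ⟨y, hy⟩
      refine ⟨y * x, fun n => ?_⟩
      rw [hy n, hx n]; cases a.1 n <;> simp [mul_assoc]

lemma coprime_of_gcd_quot (hcancel : LeftCancellativeUpToInv M)
    {I : Type} [Countable I] [Nonempty I] {δ : M} {w v : I → M}
    (hδ : IsLeftGcd δ w) (hv : ∀ i, δ * v i = w i) : LeftCoprimeFam v := by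
  rintro d ⟨c, hc⟩
  obtain ⟨e, he⟩ := hδ.2 (δ * d) ⟨c, fun i => by rw [mul_assoc, hc, hv]⟩
  rw [mul_assoc] at he
  obtain ⟨x, hx⟩ := hcancel PUnit δ (fun _ => d * e) (fun _ => 1)
    (fun _ => by rw [he, mul_one])
  have h1 : d * e = ↑x * 1 := hx PUnit.unit
  exact ⟨e * ↑x⁻¹, by rw [← mul_assoc, h1, mul_one, Units.mul_inv]⟩

lemma isLeftGcd_of_coprime (hcancel : LeftCancellativeUpToInv M)
    (hgcd : ∀ (I : Type) [Countable I] [Nonempty I] (w : I → M),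
      (∃ δ : M, IsLeftGcd δ w) ∧
      (∀ δ δ' : M, IsLeftGcd δ w → IsLeftGcd δ' w → ∃ χ : Mˣ, δ' = δ * ↑χ))
    {I : Type} [Countable I] [Nonempty I]
    {υ : M} {r w : I → M} (hr : LeftCoprimeFam r) (h : ∀ i, υ * r i = w i) :
    IsLeftGcd υ w := by
  obtain ⟨δ, hδ⟩ := (hgcd I w).1
  obtain ⟨e, he⟩ := hδ.2 υ ⟨r, h⟩
  obtain ⟨c, hc⟩ := hδ.1
  have h1 : ∀ i, υ * (e * c i) = υ * r i := fun i => by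
    rw [← mul_assoc, he, hc, h]
  obtain ⟨ξ, hξ⟩ := hcancel I υ _ _ h1
  obtain ⟨y, hy⟩ := hr (↑ξ⁻¹ * e)
    ⟨c, fun i => by rw [mul_assoc, hξ i, ← mul_assoc, Units.inv_mul, one_mul]⟩
  have hey : e * y = ↑ξ := by
    have h2 : (↑ξ : M) * (↑ξ⁻¹ * e * y) = ↑ξ * 1 := by rw [hy]
    simpa [← mul_assoc, Units.mul_inv] using h2
  have hef : e * (y * ↑ξ⁻¹) = 1 := by
    rw [← mul_assoc, hey, Units.mul_inv]
  refine ⟨⟨r, h⟩, fun d hd => ?_⟩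
  obtain ⟨c', hc'⟩ := hδ.2 d hd
  exact ⟨c' * (y * ↑ξ⁻¹), by rw [← mul_assoc, hc', ← he, mul_assoc, hef, mul_one]⟩

lemma prep_coprime (r : PreP M) {I : Type} (k : I → ℕ)
    (hk : ∀ i, (r.1 (k i)).isSome)
    (hcover : ∀ n, (r.1 n).isSome → ∃ i, k i = n) :
    LeftCoprimeFam (fun i => (r.1 (k i)).get (hk i)) := by
  rintro d ⟨c, hc⟩
  refine r.2.2 d ?_
  intro n a ha
  have hs : (r.1 n).isSome := by rw [ha]; rfl
  obtain ⟨i, hi⟩ := hcover n hs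
  refine ⟨c i, ?_⟩
  have h1 : d * c i = (r.1 (k i)).get (hk i) := hc i
  have h2 : (r.1 (k i)).get (hk i) = a := by
    subst hi; simp [ha]
  rw [h2] at h1; exact h1

end KPAux

theorem countable_powers_of_monoid_properties (M : Type) [Monoid M]
    (hcancel : LeftCancellativeUpToInv M)
    (hcoprime : RightCoprimeCancellative M)
    (hgcd : ∀ (I : Type) [Countable I] [Nonempty I] (w : I → M),
      (∃ δ : M, IsLeftGcd δ w) ∧
      (∀ δ δ' : M, IsLeftGcd δ w → IsLeftGcd δ' w →
        ∃ χ : Mˣ, δ' = δ * ↑χ)) :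
    HasCountablePowersOfOne M := by
  classical
  refine ⟨Quotient (prePSetoid M),
    fun n p => (p.out.1 n).map (fun a => (a, PUnit.unit)), ?_⟩
  intro X f
  set g : X → ℕ → Option M := fun x n => (f n x).map Prod.fst with hgdef
  have hf : ∀ n x, f n x = (g x n).map (fun a => (a, PUnit.unit)) := by
    intro n x
    cases h : f n x with
    | none => simp [hgdef, h]
    | some q => rcases q with ⟨a, ⟨⟩⟩; simp [hgdef, h]
  have comp_eq : ∀ (h : X → Option (M × Quotient (prePSetoid M))) (n : ℕ) (x : X),
      KlComp (fun p : Quotient (prePSetoid M) =>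
          (p.out.1 n).map (fun a => (a, PUnit.unit))) h x
        = ((h x).bind fun p => (p.2.out.1 n).map (fun a => p.1 * a)).map
            (fun a => (a, PUnit.unit)) := by
    intro h n x
    cases hx : h x with
    | none => simp [KlComp, hx]
    | some p =>
      simp only [KlComp, hx, Option.bind_some, Option.map_map]
      cases h2 : p.2.out.1 n <;> simp [h2, Function.comp]
  have map_inj : ∀ (o o' : Option M),
      o.map (fun a => (a, PUnit.unit)) = o'.map (fun a => (a, PUnit.unit)) → o = o' := by
    intro o o' h
    cases o <;> cases o' <;>
      simp only [Option.map_none, Option.map_some, Option.some.injEq,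
        Prod.mk.injEq, reduceCtorEq] at h ⊢
    · exact h.1
  have sat_iff : ∀ (h : X → Option (M × Quotient (prePSetoid M))),
      (∀ n, KlComp (fun p : Quotient (prePSetoid M) =>
          (p.out.1 n).map (fun a => (a, PUnit.unit))) h = f n) ↔
      (∀ x n, ((h x).bind fun p => (p.2.out.1 n).map (fun a => p.1 * a)) = g x n) := by
    intro h
    constructor
    · intro H x n
      apply map_inj
      rw [← comp_eq h n x, H n, hf n x]
    · intro H n
      funext x
      rw [comp_eq h n x, H x n, ← hf n x]
  -- pointwise existence
  have exi : ∀ x, ∃ o : Option (M × Quotient (prePSetoid M)),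
      ∀ n, (o.bind fun p => (p.2.out.1 n).map (fun a => p.1 * a)) = g x n := by
    intro x
    by_cases hx : ∀ n, g x n = none
    · exact ⟨none, fun n => by simp [hx n]⟩
    · push_neg at hx
      have hne : ∃ n, (g x n).isSome := by
        obtain ⟨n, hn⟩ := hx
        exact ⟨n, Option.ne_none_iff_isSome.1 hn⟩
      haveI : Nonempty {n : ℕ // (g x n).isSome} := ⟨⟨hne.choose, hne.choose_spec⟩⟩
      set w : {n : ℕ // (g x n).isSome} → M := fun i => (g x i.1).get i.2 with hw
      obtain ⟨δ, hδ⟩ := (hgcd {n : ℕ // (g x n).isSome} w).1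
      obtain ⟨v, hv⟩ := hδ.1
      have hvcop : LeftCoprimeFam v := coprime_of_gcd_quot hcancel hδ hv
      set vopt : ℕ → Option M :=
        fun n => if hn : (g x n).isSome then some (v ⟨n, hn⟩) else none with hvopt
      have hPre : (∃ n a, vopt n = some a) ∧
          ∀ d : M, (∀ n a, vopt n = some a → ∃ c, d * c = a) → ∃ y, d * y = 1 := by
        constructor
        · obtain ⟨n, hn⟩ := hne
          exact ⟨n, v ⟨n, hn⟩, by simp [hvopt, hn]⟩
        · intro d hd
          refine hvcop d ⟨fun i => (hd i.1 (v i) (by simp [hvopt, i.2])).choose,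
            fun i => (hd i.1 (v i) (by simp [hvopt, i.2])).choose_spec⟩
      obtain ⟨xu, hxu⟩ := Quotient.mk_out (s := prePSetoid M) ⟨vopt, hPre⟩
      refine ⟨some (δ * ↑xu, ⟦(⟨vopt, hPre⟩ : PreP M)⟧), fun n => ?_⟩
      simp only [Option.bind_some]
      by_cases hn : (g x n).isSome
      · have h1 : vopt n = some (v ⟨n, hn⟩) := by simp [hvopt, hn]
        have h2 : vopt n = Option.map (fun a => (↑xu : M) * a)
            ((Quotient.out (s := prePSetoid M) ⟦(⟨vopt, hPre⟩ : PreP M)⟧).1 n) := hxu n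
        rw [h1] at h2
        cases hb : (Quotient.out (s := prePSetoid M) ⟦(⟨vopt, hPre⟩ : PreP M)⟧).1 n with
        | none => rw [hb] at h2; simp at h2
        | some b =>
          rw [hb] at h2
          have h3 : ↑xu * b = v ⟨n, hn⟩ := by simpa using h2.symm
          have h4 : δ * ↑xu * b = (g x n).get hn := by
            rw [mul_assoc, h3, hv]
          simp only [Option.map_some]
          rw [h4, Option.some_get]
      · have hgn : g x n = none := Option.not_isSome_iff_eq_none.1 hn
        have h1 : vopt n = none := by simp [hvopt, hn]
        have h2 : vopt n = Option.map (fun a => (↑xu : M) * a)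
            ((Quotient.out (s := prePSetoid M) ⟦(⟨vopt, hPre⟩ : PreP M)⟧).1 n) := hxu n
        rw [h1] at h2
        cases hb : (Quotient.out (s := prePSetoid M) ⟦(⟨vopt, hPre⟩ : PreP M)⟧).1 n with
        | none => simp [hgn]
        | some b => rw [hb] at h2; simp at h2
  -- uniqueness
  have uniq : ∀ h₁ h₂ : X → Option (M × Quotient (prePSetoid M)),
      (∀ x n, ((h₁ x).bind fun p => (p.2.out.1 n).map (fun a => p.1 * a)) = g x n) →
      (∀ x n, ((h₂ x).bind fun p => (p.2.out.1 n).map (fun a => p.1 * a)) = g x n) →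
      h₁ = h₂ := by
    intro h₁ h₂ H₁ H₂
    funext x
    have key : ∀ o₁ o₂ : Option (M × Quotient (prePSetoid M)),
        (∀ n, (o₁.bind fun p => (p.2.out.1 n).map (fun a => p.1 * a)) = g x n) →
        (∀ n, (o₂.bind fun p => (p.2.out.1 n).map (fun a => p.1 * a)) = g x n) →
        o₁ = o₂ := by
      have hsome : ∀ (υ : M) (p : Quotient (prePSetoid M)),
          (∀ n, ((some (υ, p) : Option (M × Quotient (prePSetoid M))).bind
            fun p => (p.2.out.1 n).map (fun a => p.1 * a)) = g x n) →
          ∃ n, (g x n).isSome := by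
        intro υ p H
        obtain ⟨n, a, ha⟩ := p.out.2.1
        refine ⟨n, ?_⟩
        have := H n
        simp only [Option.bind_some, ha, Option.map_some] at this
        rw [← this]; rfl
      intro o₁ o₂ H1 H2
      match o₁, o₂ with
      | none, none => rfl
      | none, some (υ, q) =>
        obtain ⟨n, hn⟩ := hsome υ q H2
        have := H1 n
        simp only [Option.bind_none] at this
        rw [← this] at hn; simp at hn
      | some (υ, p), none =>
        obtain ⟨n, hn⟩ := hsome υ p H1
        have := H2 n
        simp only [Option.bind_none] at this
        rw [← this] at hn; simp at hn
      | some (υ, p), some (υ', q) =>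
        simp only [Option.bind_some] at H1 H2
        have E : ∀ n, (p.out.1 n).map (fun a => υ * a)
            = (q.out.1 n).map (fun a => υ' * a) := fun n => by rw [H1 n, H2 n]
        have hnone : ∀ n, p.out.1 n = none ↔ q.out.1 n = none := by
          intro n
          have hEn := E n
          constructor
          · intro h
            rw [h] at hEn
            exact Option.map_eq_none_iff.1 hEn.symm
          · intro h
            rw [h] at hEn
            exact Option.map_eq_none_iff.1 hEn
        have hsupp : ∀ n, (p.out.1 n).isSome ↔ (q.out.1 n).isSome := by
          intro n
          rw [← Option.ne_none_iff_isSome, ← Option.ne_none_iff_isSome]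
          exact not_congr (hnone n)
        haveI hNE : Nonempty {n : ℕ // (p.out.1 n).isSome} := by
          obtain ⟨n, a, ha⟩ := p.out.2.1
          exact ⟨⟨n, by rw [ha]; rfl⟩⟩
        set R : {n : ℕ // (p.out.1 n).isSome} → M :=
          fun i => (p.out.1 i.1).get i.2 with hR
        set R' : {n : ℕ // (p.out.1 n).isSome} → M :=
          fun i => (q.out.1 i.1).get ((hsupp i.1).1 i.2) with hR'
        have hE : ∀ i, υ * R i = υ' * R' i := by
          intro i
          have hEn := E i.1
          have h1 : p.out.1 i.1 = some (R i) := (Option.some_get i.2).symm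
          have h2 : q.out.1 i.1 = some (R' i) := (Option.some_get ((hsupp i.1).1 i.2)).symm
          rw [h1, h2] at hEn
          simp only [Option.map_some, Option.some.injEq] at hEn
          exact hEn
        have cop : LeftCoprimeFam R :=
          prep_coprime p.out (fun i : {n : ℕ // (p.out.1 n).isSome} => i.1)
            (fun i => i.2) (fun n hn => ⟨⟨n, hn⟩, rfl⟩)
        have cop' : LeftCoprimeFam R' :=
          prep_coprime q.out (fun i : {n : ℕ // (p.out.1 n).isSome} => i.1)
            (fun i => (hsupp i.1).1 i.2) (fun n hn => ⟨⟨n, (hsupp n).2 hn⟩, rfl⟩)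
        have G1 : IsLeftGcd υ (fun i => υ * R i) :=
          isLeftGcd_of_coprime hcancel hgcd cop (fun i => rfl)
        have G2 : IsLeftGcd υ' (fun i => υ * R i) :=
          isLeftGcd_of_coprime hcancel hgcd cop' (fun i => (hE i).symm)
        obtain ⟨χ, hχ⟩ := (hgcd _ (fun i => υ * R i)).2 υ υ' G1 G2
        have h3 : ∀ i, υ * (↑χ * R' i) = υ * R i := by
          intro i
          rw [← mul_assoc, ← hχ, hE i]
        obtain ⟨ξ, hξ⟩ := hcancel _ υ _ _ h3
        have hrel : (prePSetoid M).r p.out q.out := by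
          refine ⟨χ⁻¹ * ξ, fun n => ?_⟩
          by_cases hn : (p.out.1 n).isSome
          · rw [← Option.some_get hn, ← Option.some_get ((hsupp n).1 hn)]
            simp only [Option.map_some]
            congr 1
            have h4 := hξ ⟨n, hn⟩
            have h5 : (↑χ⁻¹ : M) * (↑χ * R' ⟨n, hn⟩) = ↑χ⁻¹ * (↑ξ * R ⟨n, hn⟩) := by
              rw [h4]
            simpa [← mul_assoc, Units.inv_mul] using h5
          · have hqn : (q.out.1 n) = none :=
              Option.not_isSome_iff_eq_none.1 (fun h => hn ((hsupp n).2 h))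
            have hpn : (p.out.1 n) = none := Option.not_isSome_iff_eq_none.1 hn
            rw [hqn, hpn]; rfl
        have hpq : p = q := by
          rw [← Quotient.out_eq p, ← Quotient.out_eq q]
          exact Quotient.sound hrel
        have hout : p.out = q.out := by rw [hpq]
        have hRR : ∀ i, R' i = R i := by
          intro i
          simp only [hR, hR']
          congr 1
          exact congrArg (fun r : PreP M => r.1 i.1) hout.symm
        have hE' : ∀ i, υ * R i = υ' * R i := fun i => by rw [hE i, hRR i]
        have hυ : υ = υ' := hcoprime _ υ υ' R cop hE'
        rw [hυ, hpq]
    exact key (h₁ x) (h₂ x) (H₁ x) (H₂ x)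
  refine ⟨fun x => (exi x).choose, (sat_iff _).2 (fun x => (exi x).choose_spec), ?_⟩
  intro h' H'
  exact uniq h' _ ((sat_iff h').1 H') (fun x => (exi x).choose_spec)
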